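/- Let $f_\varepsilon, f \in L^1(\mathbb{R}^d)$ for $\varepsilon \in (0,1]$ be nonnegative, continuous, radial, radially nonincreasing functions such that $f_\varepsilon \to f$ weakly as measures on $\mathbb{R}^d$ as $\varepsilon \to 0$. Then $f_\varepsilon(x) \to f(x)$ pointwise for every $x \neq 0$. -/
import Mathlib

open MeasureTheory Filter Set

noncomputable def testφ {d : ℕ} (a b : ℝ) (y : EuclideanSpace ℝ (Fin d)) : ℝ :=
  max 0 (min (‖y‖ - a) (b - ‖y‖))

lemma testφ_cont {d : ℕ} (a b : ℝ) : Continuous (testφ (d := d) a b) := by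
  unfold testφ; fun_prop

lemma testφ_nonneg {d : ℕ} (a b : ℝ) (y : EuclideanSpace ℝ (Fin d)) : 0 ≤ testφ a b y :=
  le_max_left _ _

lemma testφ_pos_iff {d : ℕ} (a b : ℝ) (y : EuclideanSpace ℝ (Fin d)) :
    0 < testφ a b y ↔ a < ‖y‖ ∧ ‖y‖ < b := by
  simp [testφ, lt_min_iff, sub_pos]

lemma testφ_hcs {d : ℕ} (a b : ℝ) : HasCompactSupport (testφ (d := d) a b) := by
  apply HasCompactSupport.intro (isCompact_closedBall (0 : EuclideanSpace ℝ (Fin d)) b)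
  intro y hy
  simp only [Metric.mem_closedBall, dist_zero_right, not_le] at hy
  unfold testφ
  rw [max_eq_left]
  exact le_trans (min_le_right _ _) (by linarith)

lemma testφ_abs_le {d : ℕ} (a b : ℝ) (y : EuclideanSpace ℝ (Fin d)) :
    |testφ a b y| ≤ max 0 b := by
  rw [abs_of_nonneg (testφ_nonneg a b y)]
  exact max_le_max le_rfl (le_trans (min_le_right _ _) (by have := norm_nonneg y; linarith))

lemma testφ_integrable {d : ℕ} (a b : ℝ) : Integrable (testφ (d := d) a b) :=
  (testφ_cont a b).integrable_of_hasCompactSupport (testφ_hcs a b)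

lemma testφ_mul_integrable {d : ℕ} (a b : ℝ) {g : EuclideanSpace ℝ (Fin d) → ℝ}
    (hg : Continuous g) : Integrable (fun y => testφ a b y * g y) :=
  ((testφ_cont a b).mul hg).integrable_of_hasCompactSupport ((testφ_hcs a b).mul_right)

lemma testφ_integral_pos {d : ℕ} (hd : 1 ≤ d) {a b : ℝ} (ha : 0 ≤ a) (hab : a < b) :
    0 < ∫ y, testφ (d := d) a b y := by
  haveI : Nonempty (Fin d) := ⟨⟨0, hd⟩⟩
  rw [integral_pos_iff_support_of_nonneg (fun y => testφ_nonneg a b y) (testφ_integrable a b)]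
  apply ((testφ_cont (d := d) a b).isOpen_support).measure_pos volume
  refine ⟨((a + b) / 2) • EuclideanSpace.single (⟨0, hd⟩ : Fin d) (1 : ℝ), ?_⟩
  rw [Function.mem_support]
  have hn : ‖((a + b) / 2) • EuclideanSpace.single (⟨0, hd⟩ : Fin d) (1 : ℝ)‖ = (a + b) / 2 := by
    rw [norm_smul, EuclideanSpace.norm_single]
    simp [Real.norm_eq_abs, abs_of_nonneg (by linarith : (0:ℝ) ≤ a + b)]
  have : 0 < testφ a b (((a + b) / 2) • EuclideanSpace.single (⟨0, hd⟩ : Fin d) (1 : ℝ)) := by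
    rw [testφ_pos_iff, hn]; constructor <;> linarith
  exact ne_of_gt this

lemma integral_testφ_mul_le {d : ℕ} {a b C : ℝ}
    {g : EuclideanSpace ℝ (Fin d) → ℝ} (hg : Continuous g)
    (h : ∀ y : EuclideanSpace ℝ (Fin d), a < ‖y‖ → ‖y‖ < b → g y ≤ C) :
    ∫ y : EuclideanSpace ℝ (Fin d), testφ a b y * g y ≤ C * ∫ y : EuclideanSpace ℝ (Fin d), testφ a b y := by
  rw [← integral_const_mul]
  apply integral_mono (testφ_mul_integrable a b hg) ((testφ_integrable (d := d) a b).const_mul C)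
  intro y
  by_cases hy : 0 < testφ a b y
  · obtain ⟨h1, h2⟩ := (testφ_pos_iff a b y).mp hy
    calc testφ a b y * g y ≤ testφ a b y * C := by
          exact mul_le_mul_of_nonneg_left (h y h1 h2) hy.le
      _ = C * testφ a b y := mul_comm _ _
  · have h0 : testφ a b y = 0 := le_antisymm (not_lt.mp hy) (testφ_nonneg a b y)
    simp [h0]

lemma le_integral_testφ_mul {d : ℕ} {a b C : ℝ}
    {g : EuclideanSpace ℝ (Fin d) → ℝ} (hg : Continuous g)
    (h : ∀ y : EuclideanSpace ℝ (Fin d), a < ‖y‖ → ‖y‖ < b → C ≤ g y) :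
    C * ∫ y : EuclideanSpace ℝ (Fin d), testφ a b y ≤ ∫ y : EuclideanSpace ℝ (Fin d), testφ a b y * g y := by
  rw [← integral_const_mul]
  apply integral_mono ((testφ_integrable (d := d) a b).const_mul C) (testφ_mul_integrable a b hg)
  intro y
  by_cases hy : 0 < testφ a b y
  · obtain ⟨h1, h2⟩ := (testφ_pos_iff a b y).mp hy
    calc C * testφ a b y = testφ a b y * C := mul_comm _ _
      _ ≤ testφ a b y * g y := mul_le_mul_of_nonneg_left (h y h1 h2) hy.le
  · have h0 : testφ a b y = 0 := le_antisymm (not_lt.mp hy) (testφ_nonneg a b y)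
    simp [h0]

theorem pointwise_convergence_of_weak_unimodal
    {d : ℕ} (hd : 1 ≤ d)
    (fε : ℝ → EuclideanSpace ℝ (Fin d) → ℝ) (f : EuclideanSpace ℝ (Fin d) → ℝ)
    (hint : ∀ ε ∈ Set.Ioc (0:ℝ) 1, Integrable (fε ε))
    (hfint : Integrable f)
    (hnn : ∀ ε ∈ Set.Ioc (0:ℝ) 1, ∀ x, 0 ≤ fε ε x)
    (hfnn : ∀ x, 0 ≤ f x)
    (hcont : ∀ ε ∈ Set.Ioc (0:ℝ) 1, Continuous (fε ε))
    (hfcont : Continuous f)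
    (hrad : ∀ ε ∈ Set.Ioc (0:ℝ) 1, ∀ x y : EuclideanSpace ℝ (Fin d), ‖x‖ = ‖y‖ → fε ε x = fε ε y)
    (hfrad : ∀ x y : EuclideanSpace ℝ (Fin d), ‖x‖ = ‖y‖ → f x = f y)
    (hmono : ∀ ε ∈ Set.Ioc (0:ℝ) 1, ∀ x y : EuclideanSpace ℝ (Fin d), ‖x‖ ≤ ‖y‖ → fε ε y ≤ fε ε x)
    (hfmono : ∀ x y : EuclideanSpace ℝ (Fin d), ‖x‖ ≤ ‖y‖ → f y ≤ f x)
    (hweak : ∀ φ : EuclideanSpace ℝ (Fin d) → ℝ, Continuous φ → (∃ M, ∀ x, |φ x| ≤ M) →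
      Tendsto (fun ε => ∫ x, φ x * fε ε x) (nhdsWithin 0 (Set.Ioi 0))
        (nhds (∫ x, φ x * f x))) :
    ∀ x : EuclideanSpace ℝ (Fin d), x ≠ 0 →
      Tendsto (fun ε => fε ε x) (nhdsWithin 0 (Set.Ioi 0)) (nhds (f x)) := by
  intro x hx
  haveI : Nonempty (Fin d) := ⟨⟨0, hd⟩⟩
  have hr0 : (0:ℝ) < ‖x‖ := norm_pos_iff.mpr hx
  set e : EuclideanSpace ℝ (Fin d) := EuclideanSpace.single (⟨0, hd⟩ : Fin d) (1:ℝ) with he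
  have hnorme : ‖e‖ = 1 := by rw [he, EuclideanSpace.norm_single]; norm_num
  have hsm : ∀ t : ℝ, 0 ≤ t → ‖t • e‖ = t := by
    intro t ht
    rw [norm_smul, hnorme, mul_one, Real.norm_eq_abs, abs_of_nonneg ht]
  have hray : Continuous fun t : ℝ => f (t • e) := hfcont.comp (by fun_prop)
  have hvx : f (‖x‖ • e) = f x := hfrad _ _ (by rw [hsm _ hr0.le])
  rw [Metric.tendsto_nhds]
  intro δ hδ
  -- choose a < ‖x‖
  have hA : ∀ᶠ t in nhdsWithin ‖x‖ (Set.Iio ‖x‖),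
      f (t • e) < f x + δ/2 ∧ 0 < t ∧ t < ‖x‖ := by
    refine Filter.Eventually.and ?_ (Filter.Eventually.and ?_ ?_)
    · apply Filter.Eventually.filter_mono nhdsWithin_le_nhds
      exact Filter.Tendsto.eventually_lt_const (show f (‖x‖ • e) < f x + δ/2 by rw [hvx]; linarith) hray.continuousAt
    · exact Filter.Eventually.filter_mono nhdsWithin_le_nhds (eventually_gt_nhds hr0)
    · exact eventually_mem_nhdsWithin.mono (fun t ht => ht)
  obtain ⟨a, haf, ha0, har⟩ := hA.exists
  -- choose b > ‖x‖
  have hB : ∀ᶠ t in nhdsWithin ‖x‖ (Set.Ioi ‖x‖),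
      f x - δ/2 < f (t • e) ∧ ‖x‖ < t := by
    refine Filter.Eventually.and ?_ ?_
    · apply Filter.Eventually.filter_mono nhdsWithin_le_nhds
      exact Filter.Tendsto.eventually_const_lt (show f x - δ/2 < f (‖x‖ • e) by rw [hvx]; linarith) hray.continuousAt
    · exact eventually_mem_nhdsWithin.mono (fun t ht => ht)
  obtain ⟨b, hbf, hbr⟩ := hB.exists
  have hb0 : (0:ℝ) < b := hr0.trans hbr
  -- test functions
  have hc1 : 0 < ∫ y : EuclideanSpace ℝ (Fin d), testφ a ‖x‖ y := testφ_integral_pos hd ha0.le har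
  have hc2 : 0 < ∫ y : EuclideanSpace ℝ (Fin d), testφ ‖x‖ b y :=
    testφ_integral_pos hd hr0.le hbr
  have hw1 := hweak (testφ a ‖x‖) (testφ_cont _ _) ⟨max 0 ‖x‖, testφ_abs_le _ _⟩
  have hw2 := hweak (testφ ‖x‖ b) (testφ_cont _ _) ⟨max 0 b, testφ_abs_le _ _⟩
  have hub : ∫ y : EuclideanSpace ℝ (Fin d), testφ a ‖x‖ y * f y
      ≤ f (a • e) * ∫ y : EuclideanSpace ℝ (Fin d), testφ a ‖x‖ y :=
    integral_testφ_mul_le hfcont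
      (fun y h1 _ => hfmono (a • e) y (by rw [hsm a ha0.le]; exact h1.le))
  have hlb : f (b • e) * ∫ y : EuclideanSpace ℝ (Fin d), testφ ‖x‖ b y
      ≤ ∫ y : EuclideanSpace ℝ (Fin d), testφ ‖x‖ b y * f y :=
    le_integral_testφ_mul hfcont
      (fun y _ h2 => hfmono y (b • e) (by rw [hsm b hb0.le]; exact h2.le))
  have hev1 : ∀ᶠ ε in nhdsWithin (0:ℝ) (Set.Ioi 0),
      (∫ y, testφ a ‖x‖ y * fε ε y)
        < f (a • e) * (∫ y : EuclideanSpace ℝ (Fin d), testφ a ‖x‖ y)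
          + δ/2 * ∫ y : EuclideanSpace ℝ (Fin d), testφ a ‖x‖ y :=
    Filter.Tendsto.eventually_lt_const (by nlinarith) hw1
  have hev2 : ∀ᶠ ε in nhdsWithin (0:ℝ) (Set.Ioi 0),
      f (b • e) * (∫ y : EuclideanSpace ℝ (Fin d), testφ ‖x‖ b y)
          - δ/2 * (∫ y : EuclideanSpace ℝ (Fin d), testφ ‖x‖ b y)
        < ∫ y, testφ ‖x‖ b y * fε ε y :=
    Filter.Tendsto.eventually_const_lt (by nlinarith) hw2
  have hIoc : ∀ᶠ ε in nhdsWithin (0:ℝ) (Set.Ioi 0), ε ∈ Set.Ioc (0:ℝ) 1 := by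
    have h1 : ∀ᶠ ε in nhdsWithin (0:ℝ) (Set.Ioi 0), ε ∈ Set.Ioi (0:ℝ) :=
      eventually_mem_nhdsWithin
    have h2 : ∀ᶠ ε in nhdsWithin (0:ℝ) (Set.Ioi 0), ε < 1 :=
      Filter.Eventually.filter_mono nhdsWithin_le_nhds (eventually_lt_nhds one_pos)
    filter_upwards [h1, h2] with ε hε1 hε2
    exact ⟨hε1, hε2.le⟩
  filter_upwards [hev1, hev2, hIoc] with ε h1 h2 hε
  have hlow1 : fε ε x * (∫ y : EuclideanSpace ℝ (Fin d), testφ a ‖x‖ y)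
      ≤ ∫ y : EuclideanSpace ℝ (Fin d), testφ a ‖x‖ y * fε ε y :=
    le_integral_testφ_mul (hcont ε hε) (fun y _ hy2 => hmono ε hε y x hy2.le)
  have hup2 : (∫ y : EuclideanSpace ℝ (Fin d), testφ ‖x‖ b y * fε ε y)
      ≤ fε ε x * ∫ y : EuclideanSpace ℝ (Fin d), testφ ‖x‖ b y :=
    integral_testφ_mul_le (hcont ε hε) (fun y hy1 _ => hmono ε hε x y hy1.le)
  rw [Real.dist_eq, abs_sub_lt_iff]
  constructor
  · nlinarith [hlow1, h1, hc1, haf]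
  · nlinarith [hup2, h2, hc2, hbf]
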